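/- The one-soliton hodograph relation x⁽¹⁾(X,T) = X - i(λ₁+λ₂) - i(λ₁-λ₂)·tanh( i(λ₁-λ₂)X/(2λ₁λ₂) - i(λ₁-λ₂)T ) agrees with the Darboux formula x⁽¹⁾ = X + 2i(φ₂ψ₁λ₂ - φ₁ψ₂λ₁)/(ψ₂φ₁ - ψ₁φ₂) up to an additive constant; precisely, for φⱼ = Aⱼ e^{-iX/(2λⱼ)-iλⱼT}, ψⱼ = Bⱼ e^{iX/(2λⱼ)+iλⱼT} with A₁=A₂=B₁=1, B₂=-1, one has 2i(φ₂ψ₁λ₂ - φ₁ψ₂λ₁)/(ψ₂φ₁ - ψ₁φ₂) = -i(λ₁+λ₂) - i(λ₁-λ₂)·tanh( i(λ₁-λ₂)X/(2λ₁λ₂) - i(λ₁-λ₂)T ). -/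

import Mathlib

open Complex

noncomputable def ctanh (z : ℂ) : ℂ :=
  (Complex.exp z - Complex.exp (-z)) / (Complex.exp z + Complex.exp (-z))

theorem hodograph_closed_form (lam₁ lam₂ : ℂ) (h1 : lam₁ ≠ 0) (h2 : lam₂ ≠ 0)
    (hne : lam₁ ≠ lam₂) (X T : ℝ)
    (φ₁ ψ₁ φ₂ ψ₂ : ℂ)
    (hφ₁ : φ₁ = Complex.exp (-(I * X) / (2 * lam₁) - I * lam₁ * T))
    (hψ₁ : ψ₁ = Complex.exp ((I * X) / (2 * lam₁) + I * lam₁ * T))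
    (hφ₂ : φ₂ = Complex.exp (-(I * X) / (2 * lam₂) - I * lam₂ * T))
    (hψ₂ : ψ₂ = -Complex.exp ((I * X) / (2 * lam₂) + I * lam₂ * T))
    (hden : ψ₂ * φ₁ - ψ₁ * φ₂ ≠ 0)
    (htanh : Complex.exp (I * (lam₁ - lam₂) * X / (2 * lam₁ * lam₂) - I * (lam₁ - lam₂) * T)
      + Complex.exp (-(I * (lam₁ - lam₂) * X / (2 * lam₁ * lam₂) - I * (lam₁ - lam₂) * T)) ≠ 0) :
    2 * I * (φ₂ * ψ₁ * lam₂ - φ₁ * ψ₂ * lam₁) / (ψ₂ * φ₁ - ψ₁ * φ₂)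
      = -I * (lam₁ + lam₂) - I * (lam₁ - lam₂)
          * ctanh (I * (lam₁ - lam₂) * X / (2 * lam₁ * lam₂) - I * (lam₁ - lam₂) * T) := by
  have hz : I * (lam₁ - lam₂) * X / (2 * lam₁ * lam₂) - I * (lam₁ - lam₂) * T
      = ((I * X) / (2 * lam₂) + I * lam₂ * T) - ((I * X) / (2 * lam₁) + I * lam₁ * T) := by
    field_simp
    ring
  have ha : -(I * (X:ℂ)) / (2 * lam₁) - I * lam₁ * T
      = -((I * X) / (2 * lam₁) + I * lam₁ * T) := by ring
  have hb : -(I * (X:ℂ)) / (2 * lam₂) - I * lam₂ * T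
      = -((I * X) / (2 * lam₂) + I * lam₂ * T) := by ring
  rw [ctanh]
  rw [hz] at htanh ⊢
  rw [ha] at hφ₁
  rw [hb] at hφ₂
  set a := (I * (X:ℂ)) / (2 * lam₁) + I * lam₁ * T with hA
  set b := (I * (X:ℂ)) / (2 * lam₂) + I * lam₂ * T with hB
  subst hφ₁ hψ₁ hφ₂ hψ₂
  rw [neg_sub] at htanh ⊢
  rw [Complex.exp_sub, Complex.exp_sub, Complex.exp_neg, Complex.exp_neg] at *
  have e1 := Complex.exp_ne_zero a
  have e2 := Complex.exp_ne_zero b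
  set ea := Complex.exp a with hea
  set eb := Complex.exp b with heb
  field_simp at htanh hden ⊢
  ring_nf
  ring_nf at hden htanh
  have hS : ea ^ 2 + eb ^ 2 ≠ 0 := fun h => htanh (by linear_combination (eb⁻¹ * ea⁻¹) * h)
  have hD : -(ea * eb ^ 3) - ea ^ 3 * eb ≠ 0 := by
    have : -(ea * eb ^ 3) - ea ^ 3 * eb = -(ea * eb) * (ea ^ 2 + eb ^ 2) := by ring
    rw [this]
    exact mul_ne_zero (neg_ne_zero.mpr (mul_ne_zero e1 e2)) hS
  field_simp [hD, hS]
  have hS' : -ea ^ 2 - eb ^ 2 ≠ 0 := fun h => hS (by linear_combination -h)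
  field_simp [hS']
  ring
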